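/- The middle circle S¹ × {π} of the cylinder S¹ × [0, 2π] is an equivariant strong deformation retract with respect to the involution σ(z, t) = (z·exp(it), 2π − t): there is a homotopy H: (S¹ × [0,2π]) × [0,1] → S¹ × [0,2π] from the identity to a retraction onto S¹ × {π} that is σ-equivariant at every time and fixes S¹ × {π} pointwise. -/

import Mathlib

open Real

/-- The middle circle `S¹ × {π}` of the cylinder `S¹ × [0, 2π]` is an
equivariant strong deformation retract with respect to the involution
`σ(z, t) = (z·exp(it), 2π − t)`: there is a homotopy `H` from the identity to a retraction
onto `S¹ × {π}` that is `σ`-equivariant at every time and fixes `S¹ × {π}` pointwise. -/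
theorem middle_circle_equivariant_deformation_retract
    (σ : Circle × Set.Icc (0 : ℝ) (2 * π) → Circle × Set.Icc (0 : ℝ) (2 * π))
    (hσ : ∀ p, (σ p).1 = p.1 * Circle.exp (p.2 : ℝ) ∧ ((σ p).2 : ℝ) = 2 * π - (p.2 : ℝ)) :
    ∃ H : (Circle × Set.Icc (0 : ℝ) (2 * π)) × unitInterval →
        Circle × Set.Icc (0 : ℝ) (2 * π),
      Continuous H ∧
      (∀ x, H (x, 0) = x) ∧
      (∀ x, ((H (x, 1)).2 : ℝ) = π) ∧
      (∀ x s, (x.2 : ℝ) = π → H (x, s) = x) ∧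
      (∀ x s, H (σ x, s) = σ (H (x, s))) := by
  have hπ : 0 ≤ π := pi_pos.le
  have hmem : ∀ (t : Set.Icc (0 : ℝ) (2 * π)) (s : unitInterval),
      (1 - (s : ℝ)) * (t : ℝ) + (s : ℝ) * π ∈ Set.Icc (0 : ℝ) (2 * π) := by
    intro t s
    obtain ⟨t, ht0, ht2⟩ := t
    obtain ⟨s, hs0, hs1⟩ := s
    constructor
    · have := mul_nonneg (by linarith) ht0
      nlinarith
    · nlinarith
  refine ⟨fun p => (p.1.1 * Circle.exp ((p.2 : ℝ) * ((p.1.2 : ℝ) - π) / 2),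
      ⟨(1 - (p.2 : ℝ)) * (p.1.2 : ℝ) + (p.2 : ℝ) * π, hmem p.1.2 p.2⟩), ?_, ?_, ?_, ?_, ?_⟩
  · refine Continuous.prodMk ?_ (Continuous.subtype_mk ?_ _)
    · exact (continuous_fst.comp continuous_fst).mul
        (Circle.exp.continuous.comp <| by fun_prop)
    · fun_prop
  · intro x
    simp [Circle.exp_zero]
  · intro x
    simp
  · intro x s hx
    ext
    · simp [hx, Circle.exp_zero]
    · simp [hx]; ring
  · intro x s
    obtain ⟨h1, h2⟩ := hσ x
    obtain ⟨g1, g2⟩ := hσ ((x.1 * Circle.exp ((s : ℝ) * ((x.2 : ℝ) - π) / 2),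
      ⟨(1 - (s : ℝ)) * (x.2 : ℝ) + (s : ℝ) * π, hmem x.2 s⟩))
    ext
    · rw [g1]
      simp only [h1, h2, mul_assoc, ← Circle.exp_add]
      congr 1
      congr 2
      ring
    · rw [g2]
      simp only [h2]
      ring
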